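/- Let E be a topological vector space and A ⊆ E a closed subset such that every compact subset of E is contained in nA for some n ∈ ℕ. Then E is an ℵ₀-space if and only if A (with the subspace topology) is an ℵ₀-space. -/

import Mathlib

open Filter Topology Set Pointwise

/-- `N` is a k-network for `X`. -/
def IsKNetwork (X : Type*) [TopologicalSpace X] (N : Set (Set X)) : Prop :=
  ∀ U K : Set X, IsOpen U → IsCompact K → K ⊆ U →
    ∃ F : Set (Set X), F ⊆ N ∧ F.Finite ∧ K ⊆ ⋃₀ F ∧ ⋃₀ F ⊆ U

/-- `X` is an `ℵ₀`-space: a regular space with a countable k-network. -/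
def AlephZeroSpace (X : Type*) [TopologicalSpace X] : Prop :=
  RegularSpace X ∧ ∃ N : Set (Set X), N.Countable ∧ IsKNetwork X N

/-- Corollary 4.2(i): if `A` is a closed subset of a topological vector space `E` such that
every compact subset of `E` is contained in `nA` for some `n`, then `E` is an `ℵ₀`-space iff
`A` is. -/
theorem alephZero_iff_of_absorbing_closed
    {E : Type*} [AddCommGroup E] [Module ℝ E] [TopologicalSpace E]
    [IsTopologicalAddGroup E] [ContinuousSMul ℝ E]
    (A : Set E) (hA : IsClosed A)
    (habs : ∀ K : Set E, IsCompact K → ∃ n : ℕ, K ⊆ (n : ℝ) • A) :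
    AlephZeroSpace E ↔ AlephZeroSpace A := by
  constructor
  · rintro ⟨hreg, N, hNc, hN⟩
    haveI := hreg
    refine ⟨inferInstance, (fun s => (Subtype.val : A → E) ⁻¹' s) '' N, hNc.image _, ?_⟩
    intro U K hU hK hKU
    rw [isOpen_induced_iff] at hU
    obtain ⟨V, hV, rfl⟩ := hU
    have hK' : IsCompact ((Subtype.val : A → E) '' K) := hK.image continuous_subtype_val
    have hKV : (Subtype.val : A → E) '' K ⊆ V := image_subset_iff.mpr hKU
    obtain ⟨F, hFN, hFfin, hKF, hFV⟩ := hN V _ hV hK' hKV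
    refine ⟨(fun s => (Subtype.val : A → E) ⁻¹' s) '' F, image_mono hFN,
      hFfin.image _, ?_, ?_⟩
    · intro x hx
      obtain ⟨s, hsF, hxs⟩ := hKF ⟨x, hx, rfl⟩
      exact ⟨Subtype.val ⁻¹' s, mem_image_of_mem _ hsF, hxs⟩
    · rintro x ⟨s, ⟨t, htF, rfl⟩, hxs⟩
      exact hFV ⟨t, htF, hxs⟩
  · rintro ⟨hreg, N, hNc, hN⟩
    refine ⟨inferInstance,
      insert {(0 : E)}
        ((fun p : ℕ × Set A => (p.1 : ℝ) • ((Subtype.val : A → E) '' p.2)) ''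
          (Set.univ ×ˢ N)), Set.Countable.insert _ ((countable_univ.prod hNc).image _), ?_⟩
    intro U K hU hK hKU
    obtain ⟨n, hKn⟩ := habs K hK
    rcases Nat.eq_zero_or_pos n with hn | hn
    · -- `K ⊆ 0 • A ⊆ {0}`
      have hK0 : K ⊆ {(0 : E)} := by
        intro x hx
        obtain ⟨a, _, rfl⟩ := hKn hx
        simp [hn]
      rcases K.eq_empty_or_nonempty with rfl | ⟨x, hx⟩
      · exact ⟨∅, empty_subset _, finite_empty, by simp, by simp⟩
      · have hx0 : x = 0 := hK0 hx
        refine ⟨{{(0 : E)}}, singleton_subset_iff.mpr (mem_insert _ _), finite_singleton _,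
          ?_, ?_⟩
        · simpa using hK0
        · simpa using hx0 ▸ hKU hx
    · set c : ℝ := (n : ℝ) with hc
      have hc0 : c ≠ 0 := Nat.cast_ne_zero.mpr hn.ne'
      have hKA : c⁻¹ • K ⊆ A := by
        intro y hy
        obtain ⟨x, hx, rfl⟩ := hy
        obtain ⟨a, ha, rfl⟩ := hKn hx
        show c⁻¹ • (c • a) ∈ A
        rwa [inv_smul_smul₀ hc0]
      have hK'c : IsCompact (c⁻¹ • K) := hK.smul c⁻¹
      have hU'o : IsOpen (c⁻¹ • U) := hU.smul₀ (inv_ne_zero hc0)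
      have hKU' : c⁻¹ • K ⊆ c⁻¹ • U := smul_set_mono hKU
      -- move to the subspace `A`
      have hemb : Topology.IsEmbedding (Subtype.val : A → E) := Topology.IsEmbedding.subtypeVal
      have himg : (Subtype.val : A → E) '' (Subtype.val ⁻¹' (c⁻¹ • K)) = c⁻¹ • K := by
        rw [image_preimage_eq_inter_range, Subtype.range_coe]
        exact inter_eq_left.mpr hKA
      have hK0c : IsCompact ((Subtype.val : A → E) ⁻¹' (c⁻¹ • K)) := by
        rw [hemb.isCompact_iff, himg]; exact hK'c
      obtain ⟨F, hFN, hFfin, hKF, hFU⟩ := hN (Subtype.val ⁻¹' (c⁻¹ • U)) _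
        (hU'o.preimage continuous_subtype_val) hK0c
        (fun y hy => hKU' hy)
      refine ⟨(fun B => c • ((Subtype.val : A → E) '' B)) '' F, ?_, hFfin.image _, ?_, ?_⟩
      · rintro s ⟨B, hBF, rfl⟩
        exact mem_insert_of_mem _ ⟨(n, B), ⟨mem_univ _, hFN hBF⟩, rfl⟩
      · intro x hx
        have hxA : c⁻¹ • x ∈ A := hKA ⟨x, hx, rfl⟩
        have : (⟨c⁻¹ • x, hxA⟩ : A) ∈ Subtype.val ⁻¹' (c⁻¹ • K) := ⟨x, hx, rfl⟩
        obtain ⟨B, hBF, hxB⟩ := hKF this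
        refine ⟨c • ((Subtype.val : A → E) '' B), mem_image_of_mem _ hBF, ?_⟩
        refine ⟨c⁻¹ • x, ⟨⟨c⁻¹ • x, hxA⟩, hxB, rfl⟩, ?_⟩
        show c • c⁻¹ • x = x
        rw [smul_inv_smul₀ hc0]
      · rintro y ⟨s, ⟨B, hBF, rfl⟩, hy⟩
        obtain ⟨z, ⟨b, hbB, rfl⟩, rfl⟩ := hy
        have hb : (b : E) ∈ c⁻¹ • U := hFU ⟨B, hBF, hbB⟩
        obtain ⟨u, hu, hub⟩ := hb
        show c • (b : E) ∈ U
        rw [← hub]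
        show c • c⁻¹ • u ∈ U
        rwa [smul_inv_smul₀ hc0]
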